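/- For r ∈ {2,3} and every integer j with 0 ≤ j < 2^{r−1} − r + 1, every binary linear code of length (r+1)(2^{r−1}+1−j) with minimum Hamming distance at least 2(r+1) in which every coordinate has locality r has dimension at most r(2^{r−1} − r + 2 − j) − 1. -/

import Mathlib

open Finset

/-- `C` is a linear `[n,k,d]_q` code over `F`: it has `F`-dimension `k` and its minimum
Hamming distance (least Hamming weight of a nonzero codeword) equals `d`. -/
def IsLinearCode (F : Type*) [Field F] [DecidableEq F] {n : ℕ}
    (C : Submodule F (Fin n → F)) (k d : ℕ) : Prop :=
  Module.finrank F C = k ∧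
    (∀ c ∈ C, c ≠ 0 → d ≤ hammingNorm c) ∧
    ∃ c ∈ C, c ≠ 0 ∧ hammingNorm c = d

/-- Coordinate `i` of the code `C` has locality `r`. -/
def HasLocality (F : Type*) [Field F] {n : ℕ} (C : Submodule F (Fin n → F))
    (i : Fin n) (r : ℕ) : Prop :=
  ∃ R : Finset (Fin n), i ∉ R ∧ R.card ≤ r ∧
    ∃ lam : Fin n → F, ∀ c ∈ C, c i = ∑ j ∈ R, lam j * c j

/-- Coordinate `i` of the code `C` has locality `r` with a repair set contained in `S`. -/
def HasLocalityIn (F : Type*) [Field F] {n : ℕ} (C : Submodule F (Fin n → F))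
    (i : Fin n) (r : ℕ) (S : Finset (Fin n)) : Prop :=
  ∃ R : Finset (Fin n), R ⊆ S ∧ i ∉ R ∧ R.card ≤ r ∧
    ∃ lam : Fin n → F, ∀ c ∈ C, c i = ∑ j ∈ R, lam j * c j

/-- `H(I)`: the `F`-dimension of the image of `C` under the coordinate projection onto `I`. -/
noncomputable def projDim (F : Type*) [Field F] {n : ℕ}
    (C : Submodule F (Fin n → F)) (I : Finset (Fin n)) : ℕ :=
  Module.finrank F (C.map (LinearMap.funLeft F F (fun i : {x // x ∈ I} => (i : Fin n))))

/-- `k_opt^{(q)}(n,d)`: the largest dimension of a linear code of length `n` over `F`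
with minimum Hamming distance at least `d`. -/
noncomputable def kopt (F : Type*) [Field F] [DecidableEq F] (n d : ℕ) : ℕ :=
  sSup {k | ∃ C : Submodule F (Fin n → F), Module.finrank F C = k ∧
    ∀ c ∈ C, c ≠ 0 → d ≤ hammingNorm c}

lemma plotkin_aux {n d : ℕ} (D : Submodule (ZMod 2) (Fin n → ZMod 2))
    (DF : Finset (Fin n → ZMod 2)) (hmem : ∀ c, c ∈ DF ↔ c ∈ D)
    (V₀ : Finset (Fin n))
    (hD : ∀ c ∈ D, c ≠ 0 → d ≤ hammingNorm c)
    (hV : ∀ c ∈ D, ∀ j ∈ V₀, c j = 0) :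
    (DF.card - 1) * (2 * d) ≤ (n - V₀.card) * DF.card := by
  classical
  have h0 : (0 : Fin n → ZMod 2) ∈ DF := (hmem 0).2 D.zero_mem
  have hlow : (DF.card - 1) * d ≤ ∑ c ∈ DF, hammingNorm c := by
    have hge : ∀ c ∈ DF.erase 0, d ≤ hammingNorm c := fun c hc =>
      hD c ((hmem c).1 (Finset.mem_of_mem_erase hc)) (Finset.ne_of_mem_erase hc)
    calc (DF.card - 1) * d = (DF.erase 0).card * d := by
          rw [Finset.card_erase_of_mem h0]
      _ ≤ ∑ c ∈ DF.erase 0, hammingNorm c := by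
          simpa using Finset.card_nsmul_le_sum _ _ _ hge
      _ ≤ ∑ c ∈ DF, hammingNorm c :=
          Finset.sum_le_sum_of_subset (Finset.erase_subset _ _)
  have hswap : ∑ c ∈ DF, hammingNorm c
      = ∑ j : Fin n, (DF.filter (fun c => c j ≠ 0)).card := by
    simp only [hammingNorm, Finset.card_filter]
    exact Finset.sum_comm
  have hzero : ∀ j ∈ V₀, (DF.filter (fun c => c j ≠ 0)).card = 0 := by
    intro j hj
    rw [Finset.card_eq_zero, Finset.filter_eq_empty_iff]
    intro c hc
    simp [hV c ((hmem c).1 hc) j hj]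
  have hhalf : ∀ j, 2 * (DF.filter (fun c => c j ≠ 0)).card ≤ DF.card := by
    intro j
    set A := DF.filter (fun c => c j ≠ 0) with hA
    set B := DF.filter (fun c => c j = 0) with hB
    have hsplit : A.card + B.card = DF.card := by
      rw [hA, hB]
      have := Finset.card_filter_add_card_filter_not
        (s := DF) (p := fun c => c j ≠ 0)
      simpa [not_not] using this
    rcases Finset.eq_empty_or_nonempty A with hAe | ⟨c₀, hc₀⟩
    · simp [hAe]
    · have hc₀D : c₀ ∈ D := (hmem c₀).1 (Finset.mem_of_mem_filter _ hc₀)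
      have hone : ∀ a : ZMod 2, a ≠ 0 → a = 1 := by decide
      have hc₀j : c₀ j = 1 := hone _ (Finset.mem_filter.1 hc₀).2
      have hcard : A.card ≤ B.card := by
        apply Finset.card_le_card_of_injOn (fun x => x + c₀)
        · intro x hx
          have hxD : x ∈ D := (hmem x).1 (Finset.mem_of_mem_filter _ hx)
          have hxj : x j = 1 := hone _ (Finset.mem_filter.1 hx).2
          have hmem2 : x + c₀ ∈ DF := (hmem _).2 (D.add_mem hxD hc₀D)
          have hval : (x + c₀) j = 0 := by
            show x j + c₀ j = 0
            rw [hxj, hc₀j]; decide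
          simp only [hB, Finset.mem_filter]
          exact Finset.mem_filter.2 ⟨hmem2, hval⟩
        · intro a _ b _ hab
          exact add_left_injective c₀ hab
      calc 2 * A.card = A.card + A.card := by ring
        _ ≤ A.card + B.card := Nat.add_le_add_left hcard _
        _ = DF.card := hsplit
  have main : 2 * ∑ c ∈ DF, hammingNorm c ≤ (n - V₀.card) * DF.card := by
    rw [hswap, Finset.mul_sum]
    have hsub : (∑ j : Fin n, 2 * (DF.filter (fun c => c j ≠ 0)).card)
        = ∑ j ∈ Finset.univ \ V₀, 2 * (DF.filter (fun c => c j ≠ 0)).card := by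
      refine (Finset.sum_subset (Finset.sdiff_subset) ?_).symm
      intro x _ hx
      have hxV : x ∈ V₀ := by
        by_contra hxV
        exact hx (Finset.mem_sdiff.2 ⟨Finset.mem_univ x, hxV⟩)
      rw [hzero x hxV]; ring
    rw [hsub]
    calc ∑ j ∈ Finset.univ \ V₀, 2 * (DF.filter (fun c => c j ≠ 0)).card
        ≤ ∑ _j ∈ Finset.univ \ V₀, DF.card := Finset.sum_le_sum fun j _ => hhalf j
      _ = (n - V₀.card) * DF.card := by
          rw [Finset.sum_const, smul_eq_mul]
          congr 1
          clear hsub hzero hhalf hswap hlow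
          have := Finset.card_sdiff_of_subset (Finset.subset_univ V₀)
          simpa using this
  calc (DF.card - 1) * (2 * d) = 2 * ((DF.card - 1) * d) := by ring
    _ ≤ 2 * ∑ c ∈ DF, hammingNorm c := Nat.mul_le_mul_left 2 hlow
    _ ≤ (n - V₀.card) * DF.card := main

lemma step_lemma {n : ℕ} (D : Submodule (ZMod 2) (Fin n → ZMod 2)) (V₀ R : Finset (Fin n))
    (i : Fin n) (hiR : i ∉ R) (lam : Fin n → ZMod 2)
    (hlam : ∀ c ∈ D, c i = ∑ j ∈ R, lam j * c j)
    (hV : ∀ c ∈ D, ∀ j ∈ V₀, c j = 0) :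
    ∃ D' : Submodule (ZMod 2) (Fin n → ZMod 2),
      D' ≤ D ∧
      (∀ c ∈ D', ∀ j ∈ insert i (V₀ ∪ R), c j = 0) ∧
      Module.finrank (ZMod 2) D ≤ (R \ V₀).card + Module.finrank (ZMod 2) D' := by
  classical
  set S : Finset (Fin n) := R \ V₀ with hS
  let e : D →ₗ[ZMod 2] (↥S → ZMod 2) :=
    LinearMap.pi (fun j => (LinearMap.proj (j : Fin n)).comp D.subtype)
  refine ⟨(LinearMap.ker e).map D.subtype, Submodule.map_subtype_le _ _, ?_, ?_⟩
  · rintro c ⟨x, hx, rfl⟩ j hj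
    show (x : Fin n → ZMod 2) j = 0
    have hxS : ∀ j' ∈ S, (x : Fin n → ZMod 2) j' = 0 := by
      intro j' hj'
      have h := congrFun (LinearMap.mem_ker.1 hx) ⟨j', hj'⟩
      simpa [e] using h
    have hR0 : ∀ j' ∈ R, (x : Fin n → ZMod 2) j' = 0 := by
      intro j' hj'
      by_cases h : j' ∈ V₀
      · exact hV x x.2 j' h
      · exact hxS j' (Finset.mem_sdiff.2 ⟨hj', h⟩)
    rcases Finset.mem_insert.1 hj with rfl | hj
    · rw [hlam x x.2]
      apply Finset.sum_eq_zero
      intro j' hj'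
      rw [hR0 j' hj', mul_zero]
    · rcases Finset.mem_union.1 hj with h | h
      · exact hV x x.2 j h
      · exact hR0 j h
  · have hrn := LinearMap.finrank_range_add_finrank_ker e
    have h1 : Module.finrank (ZMod 2) (LinearMap.range e) ≤ S.card := by
      have h := Submodule.finrank_le (LinearMap.range e)
      rwa [Module.finrank_pi, Fintype.card_coe] at h
    have h2 : Module.finrank (ZMod 2) (LinearMap.ker e)
        = Module.finrank (ZMod 2) ((LinearMap.ker e).map D.subtype) :=
      LinearEquiv.finrank_eq
        (Submodule.equivMapOfInjective D.subtype D.injective_subtype (LinearMap.ker e))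
    rw [← h2]
    omega

lemma bot_case {n : ℕ} (D : Submodule (ZMod 2) (Fin n → ZMod 2)) (V₀ : Finset (Fin n))
    (hn : n ≤ V₀.card) (hV : ∀ c ∈ D, ∀ j ∈ V₀, c j = 0) :
    Module.finrank (ZMod 2) D = 0 := by
  have hle : V₀.card ≤ n := by simpa using Finset.card_le_univ V₀
  have huniv : V₀ = Finset.univ := by
    apply Finset.eq_univ_of_card
    rw [Fintype.card_fin]
    omega
  have hbot : D = ⊥ := by
    rw [eq_bot_iff]
    intro c hc
    simp only [Submodule.mem_bot]
    exact funext fun j => hV c hc j (huniv ▸ Finset.mem_univ j)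
  rw [hbot]
  exact finrank_bot _ _

lemma rec_bound {n : ℕ} (d r : ℕ) (C : Submodule (ZMod 2) (Fin n → ZMod 2))
    (hd : ∀ c ∈ C, c ≠ 0 → d ≤ hammingNorm c)
    (hloc : ∀ i, HasLocality (ZMod 2) C i r)
    (f : ℕ → ℕ)
    (hf : ∀ v, v < n → 2 * d < 2 ^ (f v + 1) * (2 * d + v - n) ∨
        (∀ s, s ≤ r → s + f (v + s + 1) ≤ f v)) :
    ∀ fuel (V₀ : Finset (Fin n)) (D : Submodule (ZMod 2) (Fin n → ZMod 2)),
      n ≤ V₀.card + fuel → D ≤ C → (∀ c ∈ D, ∀ j ∈ V₀, c j = 0) →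
      Module.finrank (ZMod 2) D ≤ f V₀.card := by
  classical
  intro fuel
  induction fuel with
  | zero =>
    intro V₀ D hn hDC hV
    rw [bot_case D V₀ (by omega) hV]
    exact Nat.zero_le _
  | succ fuel ih =>
    intro V₀ D hn hDC hV
    by_cases hvn : n ≤ V₀.card
    · rw [bot_case D V₀ hvn hV]
      exact Nat.zero_le _
    · push_neg at hvn
      have hdD : ∀ c ∈ D, c ≠ 0 → d ≤ hammingNorm c := fun c hc => hd c (hDC hc)
      rcases hf V₀.card hvn with hp | hstep
      · -- Plotkin case
        haveI : DecidablePred (fun c : Fin n → ZMod 2 => c ∈ D) :=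
          fun _ => Classical.propDecidable _
        set DF := Finset.univ.filter (fun c : Fin n → ZMod 2 => c ∈ D) with hDFdef
        have hmem : ∀ c, c ∈ DF ↔ c ∈ D := by
          intro c; simp [hDFdef]
        have hcard : DF.card = 2 ^ Module.finrank (ZMod 2) D := by
          have h2 : Fintype.card D = Fintype.card (ZMod 2) ^ Module.finrank (ZMod 2) D :=
            Module.card_eq_pow_finrank (K := ZMod 2) (V := D)
          rw [ZMod.card] at h2
          rw [← h2, Fintype.card_subtype]
        have hplot := plotkin_aux D DF hmem V₀ hdD hV
        by_contra hk
        push_neg at hk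
        set k := Module.finrank (ZMod 2) D with hkdef
        set a := 2 * d with hadef
        set v := V₀.card with hvdef
        set M := 2 ^ k with hMdef
        set P := 2 ^ (f v + 1) with hPdef
        have hP : P ≤ M := Nat.pow_le_pow_right (by norm_num) (by omega)
        have hpos : 0 < a + v - n := by
          rcases Nat.eq_zero_or_pos (a + v - n) with h | h
          · rw [h, Nat.mul_zero] at hp; omega
          · exact h
        set m := n - v with hmdef
        have hmlt : m < a := by omega
        have h1 : a + v - n = a - m := by omega
        rw [h1] at hp
        have hM1 : 1 ≤ M := Nat.one_le_two_pow
        rw [hcard] at hplot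
        -- hplot : (M - 1) * a ≤ m * M
        have e2 : (M - 1) * a = M * a - a := by rw [Nat.sub_mul, one_mul]
        have e : M * (a - m) + M * m = M * a := by
          rw [← Nat.mul_add]
          congr 1
          omega
        have hcomm : M * m = m * M := Nat.mul_comm _ _
        have h3 : P * (a - m) ≤ M * (a - m) := Nat.mul_le_mul_right _ hP
        omega
      · -- step case
        obtain ⟨i, hi⟩ : ∃ i, i ∉ V₀ := by
          by_contra h
          push_neg at h
          have huniv : V₀ = Finset.univ := Finset.eq_univ_iff_forall.2 h
          rw [huniv, Finset.card_univ, Fintype.card_fin] at hvn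
          omega
        obtain ⟨R, hiR, hRr, lam, hlam⟩ := hloc i
        have hlamD : ∀ c ∈ D, c i = ∑ j ∈ R, lam j * c j := fun c hc => hlam c (hDC hc)
        obtain ⟨D', hD'le, hD'V, hD'rank⟩ := step_lemma D V₀ R i hiR lam hlamD hV
        have hs : (R \ V₀).card ≤ r := le_trans (Finset.card_le_card Finset.sdiff_subset) hRr
        have hiVR : i ∉ V₀ ∪ R := by simp [hi, hiR]
        have hcard1 : (insert i (V₀ ∪ R)).card = V₀.card + (R \ V₀).card + 1 := by
          rw [Finset.card_insert_of_notMem hiVR]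
          have h := Finset.card_sdiff_add_card R V₀
          rw [Finset.union_comm V₀ R]
          omega
        have hih := ih (insert i (V₀ ∪ R)) D' (by omega) (le_trans hD'le hDC) hD'V
        rw [hcard1] at hih
        calc Module.finrank (ZMod 2) D
            ≤ (R \ V₀).card + Module.finrank (ZMod 2) D' := hD'rank
          _ ≤ (R \ V₀).card + f (V₀.card + (R \ V₀).card + 1) := by omega
          _ ≤ f V₀.card := hstep _ hs

theorem stmt17 (r j : ℕ) (hr : r = 2 ∨ r = 3) (hj : j < 2 ^ (r - 1) - r + 1)
    (C : Submodule (ZMod 2) (Fin ((r + 1) * (2 ^ (r - 1) + 1 - j)) → ZMod 2))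
    (hd : ∀ c ∈ C, c ≠ 0 → 2 * (r + 1) ≤ hammingNorm c)
    (hloc : ∀ i, HasLocality (ZMod 2) C i r) :
    Module.finrank (ZMod 2) C ≤ r * (2 ^ (r - 1) - r + 2 - j) - 1 := by
  rcases hr with rfl | rfl
  · have hj0 : j = 0 := by norm_num at hj; exact hj
    subst hj0
    have h := rec_bound (2 * (2 + 1)) 2 C hd hloc (fun _ => 2) (by decide)
      ((2 + 1) * (2 ^ (2 - 1) + 1 - 0)) ∅ C (by simp) le_rfl (by simp)
    exact le_trans h (by norm_num)
  · have hj2 : j < 2 := by norm_num at hj; omega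
    interval_cases j
    · have h := rec_bound (2 * (3 + 1)) 3 C hd hloc
        (fun v => [8, 7, 6, 6, 5, 4, 3, 2, 2, 1, 1, 1, 1].getD v 0) (by decide)
        ((3 + 1) * (2 ^ (3 - 1) + 1 - 0)) ∅ C (by simp) le_rfl (by simp)
      exact le_trans h (by norm_num)
    · have h := rec_bound (2 * (3 + 1)) 3 C hd hloc
        (fun v => [5, 4, 3, 2, 2, 1, 1, 1, 1].getD v 0) (by decide)
        ((3 + 1) * (2 ^ (3 - 1) + 1 - 1)) ∅ C (by simp) le_rfl (by simp)
      exact le_trans h (by norm_num)
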